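/- With ε_o defined as in A_n (ε_o = (1/(n+1))(|ō|·Σ_{i∈o}eᵢ − |o|·Σ_{i∈ō}eᵢ) in ℝ^{n+1}), if r and s are subsets of {1,…,n+1} with |r| = |s|, then ε_r² − ε_r·ε_s = |r △ s|/2. -/
import Mathlib


/-- For subsets of equal cardinality, ε_r² − ε_r·ε_s = |r △ s|/2. -/
theorem An_epsilon_symmDiff (n : ℕ)
    (ε : Finset (Fin (n + 1)) → (Fin (n + 1) → ℝ))
    (hε : ∀ o i, ε o i =
      if i ∈ o then (oᶜ.card : ℝ) / (n + 1) else -(o.card : ℝ) / (n + 1))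
    (r s : Finset (Fin (n + 1))) (hrs : r.card = s.card) :
    ∑ i, ε r i * ε r i - ∑ i, ε r i * ε s i = ((symmDiff r s).card : ℝ) / 2 := by
  classical
  have hn : ((n : ℝ) + 1) ≠ 0 := by positivity
  have hcompl : ∀ o : Finset (Fin (n + 1)), (oᶜ.card : ℝ) = (n + 1) - o.card := by
    intro o
    rw [Finset.card_compl, Fintype.card_fin,
      Nat.cast_sub (by simpa using Finset.card_le_univ o)]
    push_cast; ring
  have key : ∀ o i, ε o i = (if i ∈ o then (1 : ℝ) else 0) - (o.card : ℝ) / (n + 1) := by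
    intro o i
    rw [hε]
    by_cases h : i ∈ o
    · simp only [h, if_true, hcompl o]
      field_simp
    · simp only [h, if_false]
      ring
  have hsum : ∀ i, ε r i * ε r i - ε r i * ε s i =
      ((if i ∈ r then (1 : ℝ) else 0) * (if i ∈ r then (1 : ℝ) else 0)
        - (if i ∈ r then (1 : ℝ) else 0) * (if i ∈ s then (1 : ℝ) else 0))
      - ((r.card : ℝ) / (n + 1)) *
        ((if i ∈ r then (1 : ℝ) else 0) - (if i ∈ s then (1 : ℝ) else 0)) := by
    intro i
    rw [key r, key s, ← hrs]
    ring
  rw [← Finset.sum_sub_distrib]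
  simp_rw [hsum]
  have hprod : ∀ i, (if i ∈ r then (1 : ℝ) else 0) * (if i ∈ s then (1 : ℝ) else 0)
      = if i ∈ r ∩ s then (1 : ℝ) else 0 := by
    intro i
    by_cases h1 : i ∈ r <;> by_cases h2 : i ∈ s <;> simp [h1, h2]
  have hsq : ∀ i, (if i ∈ r then (1 : ℝ) else 0) * (if i ∈ r then (1 : ℝ) else 0)
      = if i ∈ r then (1 : ℝ) else 0 := by
    intro i; by_cases h1 : i ∈ r <;> simp [h1]
  simp_rw [hprod, hsq]
  have hb : ∀ t : Finset (Fin (n + 1)),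
      ∑ i, (if i ∈ t then (1 : ℝ) else 0) = t.card := by
    intro t; simp
  rw [Finset.sum_sub_distrib, Finset.sum_sub_distrib, ← Finset.mul_sum,
    Finset.sum_sub_distrib, hb, hb, hb]
  have hc1 : (r \ s).card + (r ∩ s).card = r.card := Finset.card_sdiff_add_card_inter r s
  have hc2 : (s \ r).card + (s ∩ r).card = s.card := Finset.card_sdiff_add_card_inter s r
  have hsd : (symmDiff r s).card = (r \ s).card + (s \ r).card := by
    rw [symmDiff_def]
    exact Finset.card_union_of_disjoint disjoint_sdiff_sdiff
  have hic : (s ∩ r).card = (r ∩ s).card := by rw [Finset.inter_comm]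
  have hc1' : ((r \ s).card : ℝ) + ((r ∩ s).card : ℝ) = r.card := by exact_mod_cast hc1
  have hc2' : ((s \ r).card : ℝ) + ((r ∩ s).card : ℝ) = s.card := by
    rw [← hic] at *; exact_mod_cast hc2
  have hsd' : ((symmDiff r s).card : ℝ) = ((r \ s).card : ℝ) + ((s \ r).card : ℝ) := by
    exact_mod_cast hsd
  have hrs' : (r.card : ℝ) = s.card := by exact_mod_cast hrs
  rw [hsd', hrs', sub_self, mul_zero]
  linarith
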